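/- arXiv:2509.24874 — 2 statements merged into one kernel-verified Lean document; each statement's English description precedes it below -/
import Mathlib

section
/- There exist constants c₁, c₂ > 0 such that for all integers 0 ≤ n ≤ ℓ with n ≡ ℓ (mod 2), c₁ · √ℓ / ((1+ℓ+n)^{1/4}(1+ℓ−n)^{1/4}) ≤ |Y_ℓ^n(0)| ≤ c₂ · √ℓ / ((1+ℓ+n)^{1/4}(1+ℓ−n)^{1/4}), where Y_ℓ^n(0)² = (2ℓ+1)(ℓ+n+2)(ℓ−n+2) C_{(ℓ+n)/2} C_{(ℓ−n)/2} / (4^{ℓ+2} π) and C_m = (1/(m+1))·binom(2m, m) is the m-th Catalan number. -/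
open Real

lemma binom_rec_sq (m : ℕ) :
    ((m:ℝ)+1)^2 * (Nat.centralBinom (m+1) : ℝ)^2
      = 4 * (2*(m:ℝ)+1)^2 * (Nat.centralBinom m : ℝ)^2 := by
  have hrec : ((m : ℝ) + 1) * (Nat.centralBinom (m+1) : ℝ)
      = 2 * (2 * m + 1) * (Nat.centralBinom m : ℝ) := by
    exact_mod_cast congrArg (Nat.cast : ℕ → ℝ) (Nat.succ_mul_centralBinom_succ m)
  linear_combination (((m:ℝ)+1)*(Nat.centralBinom (m+1):ℝ)
    + 2*(2*(m:ℝ)+1)*(Nat.centralBinom m:ℝ)) * hrec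

lemma binom_sq_upper (m : ℕ) :
    ((m : ℝ) + 1) * (Nat.centralBinom m : ℝ) ^ 2 ≤ ((4:ℝ) ^ m) ^ 2 := by
  induction m with
  | zero => norm_num [Nat.centralBinom]
  | succ m ih =>
    push_cast
    have hsq := binom_rec_sq m
    have hP : (0:ℝ) < ((4:ℝ) ^ m)^2 := by positivity
    have hm3 : (0:ℝ) < ((m:ℝ)+1)^3 := by positivity
    have chain : ((m:ℝ)+1)^3 * ((((m:ℝ)+1)+1) * (Nat.centralBinom (m+1) : ℝ)^2)
        ≤ ((m:ℝ)+1)^3 * (((4:ℝ) ^ (m+1))^2) := by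
      have e1 : ((m:ℝ)+1)^3 * ((((m:ℝ)+1)+1) * (Nat.centralBinom (m+1) : ℝ)^2)
          = 4*((m:ℝ)+2)*(2*(m:ℝ)+1)^2 * (((m:ℝ)+1) * (Nat.centralBinom m : ℝ)^2) := by
        linear_combination (((m:ℝ)+1)*((m:ℝ)+2)) * hsq
      rw [e1]
      have h2 : 4*((m:ℝ)+2)*(2*(m:ℝ)+1)^2 * (((m:ℝ)+1) * (Nat.centralBinom m : ℝ)^2)
          ≤ 4*((m:ℝ)+2)*(2*(m:ℝ)+1)^2 * (((4:ℝ)^m)^2) := by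
        have hc : (0:ℝ) ≤ 4*((m:ℝ)+2)*(2*(m:ℝ)+1)^2 := by positivity
        exact mul_le_mul_of_nonneg_left ih hc
      refine h2.trans ?_
      have key : 4*((m:ℝ)+2)*(2*(m:ℝ)+1)^2 ≤ 16*((m:ℝ)+1)^3 := by
        nlinarith [(Nat.cast_nonneg m : (0:ℝ) ≤ m)]
      have e2 : ((m:ℝ)+1)^3 * (((4:ℝ) ^ (m+1))^2) = (16*((m:ℝ)+1)^3) * (((4:ℝ)^m)^2) := by
        rw [pow_succ]; ring
      rw [e2]
      exact mul_le_mul_of_nonneg_right key hP.le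
    exact le_of_mul_le_mul_left chain hm3

lemma binom_sq_lower (m : ℕ) :
    ((m : ℝ) + 2) * ((4:ℝ) ^ m) ^ 2 ≤ 4 * ((m:ℝ)+1)^2 * (Nat.centralBinom m : ℝ) ^ 2 := by
  induction m with
  | zero => norm_num [Nat.centralBinom]
  | succ m ih =>
    push_cast
    rcases lt_or_ge m 5 with h | h
    · interval_cases m
      · have e : Nat.centralBinom 1 = 2 := by decide
        rw [e]; norm_num
      · have e : Nat.centralBinom 2 = 6 := by decide
        rw [e]; norm_num
      · have e : Nat.centralBinom 3 = 20 := by decide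
        rw [e]; norm_num
      · have e : Nat.centralBinom 4 = 70 := by decide
        rw [e]; norm_num
      · have e : Nat.centralBinom 5 = 252 := by decide
        rw [e]; norm_num
    · have hm : (5:ℝ) ≤ (m:ℝ) := by exact_mod_cast h
      have hm0 : (0:ℝ) ≤ (m:ℝ) := by positivity
      have hsq := binom_rec_sq m
      have hP : (0:ℝ) < ((4:ℝ) ^ m)^2 := by positivity
      have hfac : (0:ℝ) < 4*((m:ℝ)+1)^4 := by positivity
      have chain : (4*((m:ℝ)+1)^4) * ((((m:ℝ)+1)+2) * ((4:ℝ) ^ (m+1)) ^ 2)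
          ≤ (4*((m:ℝ)+1)^4) * (4 * (((m:ℝ)+1)+1)^2 * (Nat.centralBinom (m+1) : ℝ) ^ 2) := by
        have key : 64*((m:ℝ)+1)^4*((m:ℝ)+3) ≤ 16*(2*(m:ℝ)+1)^2*((m:ℝ)+2)^3 := by
          nlinarith [mul_nonneg (by linarith : (0:ℝ) ≤ (m:ℝ)-5)
            (by positivity : (0:ℝ) ≤ (m:ℝ)^2+3*(m:ℝ)+7)]
        have step1 : (4*((m:ℝ)+1)^4) * ((((m:ℝ)+1)+2) * ((4:ℝ) ^ (m+1)) ^ 2)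
            = 64*((m:ℝ)+1)^4*((m:ℝ)+3) * (((4:ℝ)^m)^2) := by
          rw [pow_succ]; ring
        have step2 : 64*((m:ℝ)+1)^4*((m:ℝ)+3) * (((4:ℝ)^m)^2)
            ≤ 16*(2*(m:ℝ)+1)^2*((m:ℝ)+2)^3 * (((4:ℝ)^m)^2) :=
          mul_le_mul_of_nonneg_right key hP.le
        have step3 : 16*(2*(m:ℝ)+1)^2*((m:ℝ)+2)^3 * (((4:ℝ)^m)^2)
            ≤ 16*(2*(m:ℝ)+1)^2*((m:ℝ)+2)^2 * (4*((m:ℝ)+1)^2*(Nat.centralBinom m : ℝ)^2) := by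
          have hc : (0:ℝ) ≤ 16*(2*(m:ℝ)+1)^2*((m:ℝ)+2)^2 := by positivity
          have h3 := mul_le_mul_of_nonneg_left ih hc
          calc 16*(2*(m:ℝ)+1)^2*((m:ℝ)+2)^3 * (((4:ℝ)^m)^2)
              = 16*(2*(m:ℝ)+1)^2*((m:ℝ)+2)^2 * (((m:ℝ)+2) * ((4:ℝ)^m)^2) := by ring
            _ ≤ _ := h3
        have step4 : 16*(2*(m:ℝ)+1)^2*((m:ℝ)+2)^2 * (4*((m:ℝ)+1)^2*(Nat.centralBinom m : ℝ)^2)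
            = (4*((m:ℝ)+1)^4) * (4 * (((m:ℝ)+1)+1)^2 * (Nat.centralBinom (m+1) : ℝ) ^ 2) := by
          linear_combination (-(16:ℝ)*((m:ℝ)+1)^2*((m:ℝ)+2)^2) * hsq
        rw [step1, ← step4]
        exact step2.trans step3
      exact le_of_mul_le_mul_left chain hfac

lemma kk1 (t : ℝ) (ht : 0 ≤ t) : (t+1)^2 ≤ (t+2)*(2*t+1) := by nlinarith
lemma kk3 (t : ℝ) (ht : 0 ≤ t) : 4*t^2 ≤ (2*t+1)^2 := by nlinarith
lemma kk4 (t : ℝ) (ht : 1 ≤ t) : (2*t+1)^2 ≤ 9*t^2 := by nlinarith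
lemma kk5 (u v : ℝ) (hu : 0 ≤ u) (hv : 0 ≤ v) : (2*u+1)*(2*v+1) ≤ 4*(u+1)*(v+1) := by nlinarith

set_option maxHeartbeats 2000000 in
/-- Estimate for `|Y_ℓ^n(0)|`: there are absolute constants `c₁, c₂ > 0` such that for
all `0 ≤ n ≤ ℓ` with `n ≡ ℓ (mod 2)` (and `ℓ ≥ 1`),
`|Y_ℓ^n(0)| ≍ √ℓ / ((1+ℓ+n)^{1/4} (1+ℓ−n)^{1/4})`, where
`Y_ℓ^n(0)² = (2ℓ+1)(ℓ+n+2)(ℓ−n+2) C_{(ℓ+n)/2} C_{(ℓ−n)/2} / (4^{ℓ+2} π)` and `C_m` is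
the `m`-th Catalan number. -/
theorem stmt_6 :
    ∃ c₁ c₂ : ℝ, 0 < c₁ ∧ 0 < c₂ ∧ ∀ ℓ n : ℕ, 1 ≤ ℓ → n ≤ ℓ → n % 2 = ℓ % 2 →
      c₁ * Real.sqrt ℓ /
          (((1 + ℓ + n : ℝ)) ^ ((1:ℝ)/4) * ((1 + (ℓ : ℝ) - n)) ^ ((1:ℝ)/4)) ≤
        Real.sqrt (((2 * ℓ + 1 : ℝ) * (ℓ + n + 2 : ℝ) * ((ℓ : ℝ) - n + 2) *
            (catalan ((ℓ + n) / 2) : ℝ) * (catalan ((ℓ - n) / 2) : ℝ)) /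
          (4 ^ (ℓ + 2) * π)) ∧
      Real.sqrt (((2 * ℓ + 1 : ℝ) * (ℓ + n + 2 : ℝ) * ((ℓ : ℝ) - n + 2) *
            (catalan ((ℓ + n) / 2) : ℝ) * (catalan ((ℓ - n) / 2) : ℝ)) /
          (4 ^ (ℓ + 2) * π)) ≤
        c₂ * Real.sqrt ℓ /
          (((1 + ℓ + n : ℝ)) ^ ((1:ℝ)/4) * ((1 + (ℓ : ℝ) - n)) ^ ((1:ℝ)/4)) := by
  have hπ : (0:ℝ) < π := Real.pi_pos
  refine ⟨Real.sqrt (1/(8*π)), Real.sqrt (3/(2*π)),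
    Real.sqrt_pos.mpr (by positivity), Real.sqrt_pos.mpr (by positivity), ?_⟩
  intro ℓ n hℓ hnl hpar
  obtain ⟨a, b, h2a, h2b⟩ : ∃ a b, ℓ + n = 2*a ∧ ℓ - n = 2*b :=
    ⟨(ℓ+n)/2, (ℓ-n)/2, by omega, by omega⟩
  have hia : (ℓ + n)/2 = a := by omega
  have hib : (ℓ - n)/2 = b := by omega
  have hab : ℓ = a + b := by omega
  rw [hia, hib]
  -- real cast facts
  have ha1 : (0:ℝ) < (a:ℝ) + 1 := by positivity
  have hb1 : (0:ℝ) < (b:ℝ) + 1 := by positivity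
  have e1 : (1 + (ℓ:ℝ) + n) = 2*(a:ℝ)+1 := by
    have := congrArg (Nat.cast : ℕ → ℝ) h2a; push_cast at this; linarith
  have hln : ((ℓ - n : ℕ) : ℝ) = (ℓ:ℝ) - n := by
    rw [Nat.cast_sub hnl]
  have e2 : (1 + (ℓ:ℝ) - n) = 2*(b:ℝ)+1 := by
    have := congrArg (Nat.cast : ℕ → ℝ) h2b; rw [hln] at this; push_cast at this; linarith
  have e3 : ((ℓ:ℝ) + n + 2) = 2*((a:ℝ)+1) := by
    have := congrArg (Nat.cast : ℕ → ℝ) h2a; push_cast at this; linarith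
  have e4 : ((ℓ:ℝ) - n + 2) = 2*((b:ℝ)+1) := by
    have := congrArg (Nat.cast : ℕ → ℝ) h2b; rw [hln] at this; push_cast at this; linarith
  set A := (Nat.centralBinom a : ℝ) with hA
  set B := (Nat.centralBinom b : ℝ) with hB
  set P := (4:ℝ)^a with hP
  set Q := (4:ℝ)^b with hQ
  have hA0 : 0 ≤ A := by positivity
  have hB0 : 0 ≤ B := by positivity
  have hP0 : (0:ℝ) < P := by positivity
  have hQ0 : (0:ℝ) < Q := by positivity
  have hca : (catalan a : ℝ) = A / ((a:ℝ)+1) := by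
    have := congrArg (Nat.cast : ℕ → ℝ) (succ_mul_catalan_eq_centralBinom a)
    push_cast at this
    field_simp
    linarith
  have hcb : (catalan b : ℝ) = B / ((b:ℝ)+1) := by
    have := congrArg (Nat.cast : ℕ → ℝ) (succ_mul_catalan_eq_centralBinom b)
    push_cast at this
    field_simp
    linarith
  have h4l : (4:ℝ)^(ℓ+2) = 16*P*Q := by
    rw [hab, hP, hQ, pow_add, pow_add]; ring
  have hArgEq : ((2 * (ℓ:ℝ) + 1) * ((ℓ:ℝ) + n + 2) * ((ℓ : ℝ) - n + 2) *
            (catalan a : ℝ) * (catalan b : ℝ)) / ((4:ℝ) ^ (ℓ + 2) * π)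
      = (2*(ℓ:ℝ)+1)*A*B/(4*P*Q*π) := by
    rw [e3, e4, hca, hcb, h4l]
    field_simp
    ring
  rw [hArgEq, e1, e2]
  set E := (2*(ℓ:ℝ)+1)*A*B/(4*P*Q*π) with hE
  have hE0 : 0 ≤ E := by positivity
  -- powers of the rpow terms
  have hxpos : (0:ℝ) < 2*(a:ℝ)+1 := by positivity
  have hypos : (0:ℝ) < 2*(b:ℝ)+1 := by positivity
  have hx4 : ((2*(a:ℝ)+1) ^ ((1:ℝ)/4))^(4:ℕ) = 2*(a:ℝ)+1 := by
    rw [← Real.rpow_natCast ((2*(a:ℝ)+1) ^ ((1:ℝ)/4)) 4, ← Real.rpow_mul hxpos.le]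
    norm_num
  have hy4 : ((2*(b:ℝ)+1) ^ ((1:ℝ)/4))^(4:ℕ) = 2*(b:ℝ)+1 := by
    rw [← Real.rpow_natCast ((2*(b:ℝ)+1) ^ ((1:ℝ)/4)) 4, ← Real.rpow_mul hypos.le]
    norm_num
  set D := (2*(a:ℝ)+1) ^ ((1:ℝ)/4) * (2*(b:ℝ)+1) ^ ((1:ℝ)/4) with hD
  have hD0 : 0 < D := by
    rw [hD]; positivity
  have hD4 : D^(4:ℕ) = (2*(a:ℝ)+1)*(2*(b:ℝ)+1) := by
    rw [hD, mul_pow, hx4, hy4]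
  have hS2 : Real.sqrt (ℓ:ℝ) ^ 2 = (ℓ:ℝ) := Real.sq_sqrt (by positivity)
  have hl0 : (0:ℝ) ≤ (ℓ:ℝ) := by positivity
  have hl1 : (1:ℝ) ≤ (ℓ:ℝ) := by exact_mod_cast hℓ
  have hlab : (ℓ:ℝ) = (a:ℝ) + (b:ℝ) := by
    rw [hab]; push_cast; ring
  -- squared bounds from the binomial lemmas
  have l1a := binom_sq_lower a
  have l1b := binom_sq_lower b
  have l2a := binom_sq_upper a
  have l2b := binom_sq_upper b
  rw [← hA, ← hP] at l1a l2a
  rw [← hB, ← hQ] at l1b l2b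
  -- E squared
  have hE2 : E^2 = (2*(ℓ:ℝ)+1)^2*A^2*B^2/(16*P^2*Q^2*π^2) := by
    rw [hE]; field_simp; ring
  have hπ2 : π ≠ 0 := ne_of_gt hπ
  constructor
  · -- lower bound
    have hL0 : 0 ≤ Real.sqrt (1/(8*π)) * Real.sqrt (ℓ:ℝ) / D := by positivity
    apply (Real.le_sqrt hL0 hE0).mpr
    apply le_of_pow_le_pow_left₀ (two_ne_zero) hE0
    have hc1sq : (Real.sqrt (1/(8*π)))^2 = 1/(8*π) := Real.sq_sqrt (by positivity)
    have lhs_eq : ((Real.sqrt (1/(8*π)) * Real.sqrt (ℓ:ℝ) / D)^2)^2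
        = ((Real.sqrt (1/(8*π)))^2)^2 * ((Real.sqrt (ℓ:ℝ))^2)^2 / D^(4:ℕ) := by
      ring
    rw [lhs_eq, hc1sq, hS2, hD4, hE2]
    -- core inequality
    have k1 : ((a:ℝ)+1)^2 ≤ ((a:ℝ)+2)*(2*(a:ℝ)+1) := kk1 _ (by positivity)
    have k2 : ((b:ℝ)+1)^2 ≤ ((b:ℝ)+2)*(2*(b:ℝ)+1) := kk1 _ (by positivity)
    have k3 : 4*(ℓ:ℝ)^2 ≤ (2*(ℓ:ℝ)+1)^2 := kk3 _ hl0
    have h12 : ((a:ℝ)+1)^2*((b:ℝ)+1)^2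
        ≤ (((a:ℝ)+2)*(2*(a:ℝ)+1))*(((b:ℝ)+2)*(2*(b:ℝ)+1)) :=
      mul_le_mul k1 k2 (by positivity) (by positivity)
    have key1 : (4*(ℓ:ℝ)^2)*(((a:ℝ)+1)^2*((b:ℝ)+1)^2)
        ≤ ((2*(ℓ:ℝ)+1)^2)*((((a:ℝ)+2)*(2*(a:ℝ)+1))*(((b:ℝ)+2)*(2*(b:ℝ)+1))) :=
      mul_le_mul k3 h12 (by positivity) (by positivity)
    have h11 : (((a:ℝ)+2)*P^2)*(((b:ℝ)+2)*Q^2) ≤ (4*((a:ℝ)+1)^2*A^2)*(4*((b:ℝ)+1)^2*B^2) :=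
      mul_le_mul l1a l1b (by positivity) (by positivity)
    have hpq : (0:ℝ) ≤ P^2*Q^2 := by positivity
    have key1' := mul_le_mul_of_nonneg_right key1 hpq
    have core : 16*(ℓ:ℝ)^2*P^2*Q^2
        ≤ 64*(2*(ℓ:ℝ)+1)^2*A^2*B^2*((2*(a:ℝ)+1)*(2*(b:ℝ)+1)) := by
      have hM : (0:ℝ) < 16*((a:ℝ)+1)^2*((b:ℝ)+1)^2 := by positivity
      apply le_of_mul_le_mul_left ?_ hM
      calc 16*((a:ℝ)+1)^2*((b:ℝ)+1)^2 * (16*(ℓ:ℝ)^2*P^2*Q^2)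
          = 64*((4*(ℓ:ℝ)^2)*(((a:ℝ)+1)^2*((b:ℝ)+1)^2)*(P^2*Q^2)) := by ring
        _ ≤ 64*(((2*(ℓ:ℝ)+1)^2)*((((a:ℝ)+2)*(2*(a:ℝ)+1))*(((b:ℝ)+2)*(2*(b:ℝ)+1)))*(P^2*Q^2)) :=
            mul_le_mul_of_nonneg_left key1' (by norm_num)
        _ = (64*(2*(ℓ:ℝ)+1)^2*((2*(a:ℝ)+1)*(2*(b:ℝ)+1)))*((((a:ℝ)+2)*P^2)*(((b:ℝ)+2)*Q^2)) := by
            ring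
        _ ≤ (64*(2*(ℓ:ℝ)+1)^2*((2*(a:ℝ)+1)*(2*(b:ℝ)+1)))*((4*((a:ℝ)+1)^2*A^2)*(4*((b:ℝ)+1)^2*B^2)) :=
            mul_le_mul_of_nonneg_left h11 (by positivity)
        _ = 16*((a:ℝ)+1)^2*((b:ℝ)+1)^2 *
            (64*(2*(ℓ:ℝ)+1)^2*A^2*B^2*((2*(a:ℝ)+1)*(2*(b:ℝ)+1))) := by ring
    rw [div_le_div_iff₀ (by positivity) (by positivity)]
    calc (1/(8*π))^2 * ((ℓ:ℝ))^2 * (16*P^2*Q^2*π^2)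
        = (16*(ℓ:ℝ)^2*P^2*Q^2) * (1/64) := by field_simp; ring
      _ ≤ (64*(2*(ℓ:ℝ)+1)^2*A^2*B^2*((2*(a:ℝ)+1)*(2*(b:ℝ)+1))) * (1/64) :=
          mul_le_mul_of_nonneg_right core (by norm_num)
      _ = (2*(ℓ:ℝ)+1)^2*A^2*B^2 * ((2*(a:ℝ)+1)*(2*(b:ℝ)+1)) := by ring
  · -- upper bound
    have hR0 : 0 ≤ Real.sqrt (3/(2*π)) * Real.sqrt (ℓ:ℝ) / D := by positivity
    have hc2sq : (Real.sqrt (3/(2*π)))^2 = 3/(2*π) := Real.sq_sqrt (by positivity)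
    have hE_le : E ≤ (Real.sqrt (3/(2*π)) * Real.sqrt (ℓ:ℝ) / D)^2 := by
      apply le_of_pow_le_pow_left₀ (two_ne_zero) (by positivity)
      have rhs_eq : ((Real.sqrt (3/(2*π)) * Real.sqrt (ℓ:ℝ) / D)^2)^2
          = ((Real.sqrt (3/(2*π)))^2)^2 * ((Real.sqrt (ℓ:ℝ))^2)^2 / D^(4:ℕ) := by
        ring
      rw [rhs_eq, hc2sq, hS2, hD4, hE2]
      have k4 : (2*(ℓ:ℝ)+1)^2 ≤ 9*(ℓ:ℝ)^2 := kk4 _ hl1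
      have k5 : (2*(a:ℝ)+1)*(2*(b:ℝ)+1) ≤ 4*((a:ℝ)+1)*((b:ℝ)+1) :=
        kk5 _ _ (by positivity) (by positivity)
      have key2 : (2*(ℓ:ℝ)+1)^2*((2*(a:ℝ)+1)*(2*(b:ℝ)+1))
          ≤ (9*(ℓ:ℝ)^2)*(4*((a:ℝ)+1)*((b:ℝ)+1)) :=
        mul_le_mul k4 k5 (by positivity) (by positivity)
      have h22 : (((a:ℝ)+1)*A^2)*(((b:ℝ)+1)*B^2) ≤ P^2*Q^2 :=
        mul_le_mul l2a l2b (by positivity) (by positivity)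
      have core2 : 4*((2*(ℓ:ℝ)+1)^2*A^2*B^2)*((2*(a:ℝ)+1)*(2*(b:ℝ)+1))
          ≤ 144*(ℓ:ℝ)^2*P^2*Q^2 := by
        have hM2 : (0:ℝ) < ((a:ℝ)+1)*((b:ℝ)+1) := by positivity
        apply le_of_mul_le_mul_left ?_ hM2
        calc ((a:ℝ)+1)*((b:ℝ)+1) * (4*((2*(ℓ:ℝ)+1)^2*A^2*B^2)*((2*(a:ℝ)+1)*(2*(b:ℝ)+1)))
            = (4*(2*(ℓ:ℝ)+1)^2*((2*(a:ℝ)+1)*(2*(b:ℝ)+1)))*((((a:ℝ)+1)*A^2)*(((b:ℝ)+1)*B^2)) := by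
              ring
          _ ≤ (4*(2*(ℓ:ℝ)+1)^2*((2*(a:ℝ)+1)*(2*(b:ℝ)+1)))*(P^2*Q^2) :=
              mul_le_mul_of_nonneg_left h22 (by positivity)
          _ = ((2*(ℓ:ℝ)+1)^2*((2*(a:ℝ)+1)*(2*(b:ℝ)+1)))*(4*P^2*Q^2) := by ring
          _ ≤ ((9*(ℓ:ℝ)^2)*(4*((a:ℝ)+1)*((b:ℝ)+1)))*(4*P^2*Q^2) :=
              mul_le_mul_of_nonneg_right key2 (by positivity)
          _ = ((a:ℝ)+1)*((b:ℝ)+1) * (144*(ℓ:ℝ)^2*P^2*Q^2) := by ring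
      rw [div_le_div_iff₀ (by positivity) (by positivity)]
      calc (2*(ℓ:ℝ)+1)^2*A^2*B^2 * ((2*(a:ℝ)+1)*(2*(b:ℝ)+1))
          = (4*((2*(ℓ:ℝ)+1)^2*A^2*B^2)*((2*(a:ℝ)+1)*(2*(b:ℝ)+1)))*(1/4) := by ring
        _ ≤ (144*(ℓ:ℝ)^2*P^2*Q^2)*(1/4) := mul_le_mul_of_nonneg_right core2 (by norm_num)
        _ = (3/(2*π))^2*((ℓ:ℝ))^2*(16*P^2*Q^2*π^2) := by field_simp; ring
    calc Real.sqrt E ≤ Real.sqrt ((Real.sqrt (3/(2*π)) * Real.sqrt (ℓ:ℝ) / D)^2) :=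
          Real.sqrt_le_sqrt hE_le
      _ = Real.sqrt (3/(2*π)) * Real.sqrt (ℓ:ℝ) / D := Real.sqrt_sq hR0
end

section
/- Let n be a squarefree positive integer and let 𝒪 be the Hurwitz quaternion order. Let μ = xi + yj + zk ∈ 𝒪 be a trace-zero quaternion with x, y, z ∈ ℤ and x² + y² + z² = n, and let ι : ℚ(√−n) → B(ℚ) be the ℚ-algebra embedding sending √−n to μ. Then ι(ℚ(√−n)) ∩ 𝒪 = ι(O_E), where O_E is the ring of integers of E = ℚ(√−n); i.e., ι is an optimal embedding. -/
/-- The Hurwitz order `𝒪 = ℤ⟨1, i, j, (1+i+j+k)/2⟩` inside the rational Hamilton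
quaternions: quaternions all of whose coordinates are half-integers of the same parity. -/
def HurwitzOrder : Set (Quaternion ℚ) :=
  {a | ∃ w x y z : ℤ,
    a.re = (w : ℚ) / 2 ∧ a.imI = (x : ℚ) / 2 ∧ a.imJ = (y : ℚ) / 2 ∧ a.imK = (z : ℚ) / 2 ∧
    w % 2 = x % 2 ∧ w % 2 = y % 2 ∧ w % 2 = z % 2}

/-- The pure quaternion `xi + yj + zk`. -/
def pureQuat (x y z : ℚ) : Quaternion ℚ := ⟨0, x, y, z⟩

lemma sq_mod4 (x : ℤ) : x^2 % 4 = x % 2 := by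
  obtain ⟨k, rfl⟩ | ⟨k, rfl⟩ := Int.even_or_odd x
  · rw [show (k+k)^2 = k^2*4 by ring, Int.mul_emod_left]; omega
  · rw [show (2*k+1)^2 = 1 + (k^2+k)*4 by ring, Int.add_mul_emod_self_right]; omega

lemma sum_sq_mod (x y z n : ℤ) (h : x^2+y^2+z^2 = n) :
    n % 4 = (x%2 + y%2 + z%2) % 4 := by
  have hx := sq_mod4 x; have hy := sq_mod4 y; have hz := sq_mod4 z
  generalize x^2 = X at h hx
  generalize y^2 = Y at h hy
  generalize z^2 = Z at h hz
  omega

lemma bezout3 (x y z : ℤ) (h : Int.gcd x (Int.gcd y z) = 1) :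
    ∃ c1 c2 c3 : ℤ, c1*x + c2*y + c3*z = 1 := by
  have h1 : IsCoprime x ((Int.gcd y z : ℤ)) := by
    rw [Int.isCoprime_iff_gcd_eq_one]; simpa using h
  obtain ⟨u, v, huv⟩ := h1
  have hg := Int.gcd_eq_gcd_ab y z
  exact ⟨u, v * Int.gcdA y z, v * Int.gcdB y z, by rw [← huv, hg]; ring⟩

lemma gcd3_one (n : ℕ) (hn : Squarefree n) (x y z : ℤ)
    (hxyz : x ^ 2 + y ^ 2 + z ^ 2 = (n : ℤ)) :
    Int.gcd x (Int.gcd y z) = 1 := by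
  set d : ℕ := Int.gcd x (Int.gcd y z) with hd
  have hdx : (d:ℤ) ∣ x := Int.gcd_dvd_left _ _
  have hdg : (d:ℤ) ∣ (Int.gcd y z : ℤ) := Int.gcd_dvd_right _ _
  have hdy : (d:ℤ) ∣ y := hdg.trans (Int.gcd_dvd_left _ _)
  have hdz : (d:ℤ) ∣ z := hdg.trans (Int.gcd_dvd_right _ _)
  have hsq : ((d*d : ℕ) : ℤ) ∣ (n:ℤ) := by
    push_cast
    rw [← hxyz]
    obtain ⟨p, hp⟩ := hdx; obtain ⟨q, hq⟩ := hdy; obtain ⟨r, hr⟩ := hdz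
    exact ⟨p^2+q^2+r^2, by rw [hp, hq, hr]; ring⟩
  exact Nat.isUnit_iff.mp (hn d (Int.natCast_dvd_natCast.mp hsq))

/-- Optimality of the embedding `ι : ℚ(√−n) → B(ℚ)`, `√−n ↦ μ = xi+yj+zk` with
`x²+y²+z² = n` and `n` squarefree: an element `a + bμ` (`a, b ∈ ℚ`) of `ι(ℚ(√−n))` lies
in the Hurwitz order iff it lies in `ι(O_E)`, where `O_E = ℤ[(1+√−n)/2]` if
`−n ≡ 1 (mod 4)` and `O_E = ℤ[√−n]` otherwise. -/
theorem stmt_8 (n : ℕ) (hn : Squarefree n) (hpos : 0 < n) (x y z : ℤ)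
    (hxyz : x ^ 2 + y ^ 2 + z ^ 2 = (n : ℤ)) (a b : ℚ) :
    ((a : Quaternion ℚ) + b • pureQuat (x : ℚ) (y : ℚ) (z : ℚ) ∈ HurwitzOrder) ↔
      (if (-(n : ℤ)) % 4 = 1 then
        ∃ w u : ℤ, a = (w : ℚ) / 2 ∧ b = (u : ℚ) / 2 ∧ w % 2 = u % 2
      else (∃ w : ℤ, a = (w : ℚ)) ∧ (∃ u : ℤ, b = (u : ℚ))) := by
  obtain ⟨c1, c2, c3, hc⟩ := bezout3 x y z (gcd3_one n hn x y z hxyz)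
  have hmod := sum_sq_mod x y z n hxyz
  have hn4 : (n:ℤ) % 4 ≠ 0 := by
    intro h
    have h4 : (4:ℕ) ∣ n := by
      have : (4:ℤ) ∣ (n:ℤ) := Int.dvd_of_emod_eq_zero h
      exact_mod_cast this
    simpa using Nat.isUnit_iff.mp (hn 2 (by omega))
  have hmem : ((a : Quaternion ℚ) + b • pureQuat (x : ℚ) (y : ℚ) (z : ℚ) ∈ HurwitzOrder) ↔
      ∃ w p q r : ℤ, a = (w:ℚ)/2 ∧ b*(x:ℚ) = (p:ℚ)/2 ∧ b*(y:ℚ) = (q:ℚ)/2 ∧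
        b*(z:ℚ) = (r:ℚ)/2 ∧ w%2 = p%2 ∧ w%2 = q%2 ∧ w%2 = r%2 := by
    simp [HurwitzOrder, Set.mem_setOf_eq, Quaternion.re_smul, Quaternion.imI_smul, Quaternion.imJ_smul, Quaternion.imK_smul]
    simp [pureQuat]
  rw [hmem]
  have key : ∀ w p q r : ℤ, a = (w:ℚ)/2 → b*(x:ℚ) = (p:ℚ)/2 → b*(y:ℚ) = (q:ℚ)/2 →
      b*(z:ℚ) = (r:ℚ)/2 → ∃ u : ℤ, b = (u:ℚ)/2 ∧ p = u*x ∧ q = u*y ∧ r = u*z := by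
    intro w p q r ha hbx hby hbz
    have hb : b = ((c1*p + c2*q + c3*r : ℤ):ℚ)/2 := by
      calc b = b * ((c1*x + c2*y + c3*z : ℤ):ℚ) := by rw [hc]; norm_num
        _ = (c1:ℚ)*(b*(x:ℚ)) + (c2:ℚ)*(b*(y:ℚ)) + (c3:ℚ)*(b*(z:ℚ)) := by push_cast; ring
        _ = ((c1*p + c2*q + c3*r : ℤ):ℚ)/2 := by rw [hbx, hby, hbz]; push_cast; ring
    refine ⟨c1*p + c2*q + c3*r, hb, ?_, ?_, ?_⟩
    · have : (p:ℚ) = (((c1*p + c2*q + c3*r)*x : ℤ):ℚ) := by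
        rw [hb] at hbx; push_cast at hbx ⊢; linarith
      exact_mod_cast this
    · have : (q:ℚ) = (((c1*p + c2*q + c3*r)*y : ℤ):ℚ) := by
        rw [hb] at hby; push_cast at hby ⊢; linarith
      exact_mod_cast this
    · have : (r:ℚ) = (((c1*p + c2*q + c3*r)*z : ℤ):ℚ) := by
        rw [hb] at hbz; push_cast at hbz ⊢; linarith
      exact_mod_cast this
  by_cases h14 : (-(n:ℤ)) % 4 = 1
  · rw [if_pos h14]
    have hodd : x % 2 = 1 ∧ y % 2 = 1 ∧ z % 2 = 1 := by omega
    constructor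
    · rintro ⟨w, p, q, r, ha, hbx, hby, hbz, h1, h2, h3⟩
      obtain ⟨u, hb, hp, hq, hr⟩ := key w p q r ha hbx hby hbz
      refine ⟨w, u, ha, hb, ?_⟩
      have hpx : p % 2 = u%2 * (x%2) % 2 := by rw [hp]; exact Int.mul_emod u x 2
      rw [hodd.1] at hpx
      omega
    · rintro ⟨w, u, ha, hb, hwu⟩
      refine ⟨w, u*x, u*y, u*z, ha, ?_, ?_, ?_, ?_, ?_, ?_⟩
      · rw [hb]; push_cast; ring
      · rw [hb]; push_cast; ring
      · rw [hb]; push_cast; ring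
      · rw [Int.mul_emod u x 2, hodd.1]; omega
      · rw [Int.mul_emod u y 2, hodd.2.1]; omega
      · rw [Int.mul_emod u z 2, hodd.2.2]; omega
  · rw [if_neg h14]
    have hn12 : (n:ℤ)%4 = 1 ∨ (n:ℤ)%4 = 2 := by omega
    constructor
    · rintro ⟨w, p, q, r, ha, hbx, hby, hbz, h1, h2, h3⟩
      obtain ⟨u, hb, hp, hq, hr⟩ := key w p q r ha hbx hby hbz
      have hpx : p % 2 = u%2 * (x%2) % 2 := by rw [hp]; exact Int.mul_emod u x 2
      have hqy : q % 2 = u%2 * (y%2) % 2 := by rw [hq]; exact Int.mul_emod u y 2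
      have hrz : r % 2 = u%2 * (z%2) % 2 := by rw [hr]; exact Int.mul_emod u z 2
      have hu : u % 2 = 0 := by
        by_contra h
        have hu1 : u % 2 = 1 := by omega
        rw [hu1] at hpx hqy hrz
        omega
      rw [hu] at hpx hqy hrz
      have hw : w % 2 = 0 := by omega
      obtain ⟨w', rfl⟩ : ∃ w', w = 2*w' := ⟨w/2, by omega⟩
      obtain ⟨u', rfl⟩ : ∃ u', u = 2*u' := ⟨u/2, by omega⟩
      refine ⟨⟨w', ?_⟩, ⟨u', ?_⟩⟩
      · rw [ha]; push_cast; ring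
      · rw [hb]; push_cast; ring
    · rintro ⟨⟨w, ha⟩, ⟨u, hb⟩⟩
      refine ⟨2*w, 2*(u*x), 2*(u*y), 2*(u*z), ?_, ?_, ?_, ?_, ?_, ?_, ?_⟩
      · rw [ha]; push_cast; ring
      · rw [hb]; push_cast; ring
      · rw [hb]; push_cast; ring
      · rw [hb]; push_cast; ring
      all_goals simp [Int.mul_emod_right]
end
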